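/- Let ν be a distribution on a set X, φ : X → ℝ^d with ‖φ(x)‖₂ ≤ C for all x, G = E_ν[φφᵀ] invertible, and Ḡ_K = Σ_{k=1}^K φ(x_k)φ(x_k)ᵀ + λI with x_k i.i.d. ∼ ν. If ‖Ḡ_K/K − (G + (λ/K)I)‖ ≤ 1/(2‖G⁻¹‖) and λ/K ≤ 1/(4‖G⁻¹‖), then for all u ∈ ℝ^d: ‖u‖_{Ḡ_K⁻¹} ≤ (2/√K)·‖u‖_{G⁻¹}. -/

import Mathlib

open Matrix

/-- Operator (spectral) norm of a real `d × d` matrix. -/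
noncomputable def matOpNorm {d : ℕ} (M : Matrix (Fin d) (Fin d) ℝ) : ℝ :=
  ‖Matrix.toEuclideanCLM (𝕜 := ℝ) M‖

/-- Weighted norm `‖u‖_A = √(uᵀ A u)`. -/
noncomputable def wNorm {d : ℕ} (A : Matrix (Fin d) (Fin d) ℝ) (u : Fin d → ℝ) : ℝ :=
  Real.sqrt (u ⬝ᵥ A.mulVec u)

lemma opnorm_pair {d : ℕ} (M : Matrix (Fin d) (Fin d) ℝ) (x y : Fin d → ℝ) :
    x ⬝ᵥ M.mulVec y ≤ matOpNorm M * (Real.sqrt (∑ i, x i ^ 2) * Real.sqrt (∑ i, y i ^ 2)) := by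
  set x' : EuclideanSpace ℝ (Fin d) := (WithLp.equiv 2 (Fin d → ℝ)).symm x
  set y' : EuclideanSpace ℝ (Fin d) := (WithLp.equiv 2 (Fin d → ℝ)).symm y
  have h1 : x ⬝ᵥ M.mulVec y = inner ℝ x' (Matrix.toEuclideanCLM (𝕜 := ℝ) M y') := by
    rw [Matrix.inner_toEuclideanCLM]
    simp [PiLp.inner_apply, dotProduct, Matrix.toLin'_apply, x', y', mul_comm]
  have h2 : ‖x'‖ = Real.sqrt (∑ i, x i ^ 2) := by
    simp [EuclideanSpace.norm_eq, x', Real.norm_eq_abs, sq_abs]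
  have h3 : ‖y'‖ = Real.sqrt (∑ i, y i ^ 2) := by
    simp [EuclideanSpace.norm_eq, y', Real.norm_eq_abs, sq_abs]
  calc x ⬝ᵥ M.mulVec y = inner ℝ x' (Matrix.toEuclideanCLM (𝕜 := ℝ) M y') := h1
    _ ≤ ‖x'‖ * ‖Matrix.toEuclideanCLM (𝕜 := ℝ) M y'‖ := real_inner_le_norm _ _
    _ ≤ ‖x'‖ * (matOpNorm M * ‖y'‖) := by
        exact mul_le_mul_of_nonneg_left ((Matrix.toEuclideanCLM (𝕜 := ℝ) M).le_opNorm y') (norm_nonneg _)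
    _ = matOpNorm M * (Real.sqrt (∑ i, x i ^ 2) * Real.sqrt (∑ i, y i ^ 2)) := by
        rw [h2, h3]; ring

lemma dot_symm {d : ℕ} {A : Matrix (Fin d) (Fin d) ℝ} (hA : A.IsHermitian)
    (x y : Fin d → ℝ) : x ⬝ᵥ A.mulVec y = y ⬝ᵥ A.mulVec x := by
  have hAt : Aᵀ = A := by
    have := hA; rwa [Matrix.IsHermitian, Matrix.conjTranspose_eq_transpose_of_trivial] at this
  rw [Matrix.dotProduct_mulVec, dotProduct_comm, ← Matrix.mulVec_transpose, hAt]

lemma dot_nonneg {d : ℕ} {A : Matrix (Fin d) (Fin d) ℝ} (hA : A.PosSemidef)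
    (x : Fin d → ℝ) : 0 ≤ x ⬝ᵥ A.mulVec x := by
  have := hA.dotProduct_mulVec_nonneg x
  simpa using this

lemma cs_posSemidef {d : ℕ} {A : Matrix (Fin d) (Fin d) ℝ} (hA : A.PosSemidef)
    (x y : Fin d → ℝ) :
    (x ⬝ᵥ A.mulVec y) ^ 2 ≤ (x ⬝ᵥ A.mulVec x) * (y ⬝ᵥ A.mulVec y) := by
  have key : ∀ t : ℝ, 0 ≤ (y ⬝ᵥ A.mulVec y) * (t * t)
      + (2 * (x ⬝ᵥ A.mulVec y)) * t + (x ⬝ᵥ A.mulVec x) := by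
    intro t
    have h0 : 0 ≤ (x + t • y) ⬝ᵥ A.mulVec (x + t • y) := dot_nonneg hA _
    have hsym : x ⬝ᵥ A.mulVec y = y ⬝ᵥ A.mulVec x := dot_symm hA.isHermitian x y
    calc (0:ℝ) ≤ (x + t • y) ⬝ᵥ A.mulVec (x + t • y) := h0
      _ = (y ⬝ᵥ A.mulVec y) * (t * t) + (2 * (x ⬝ᵥ A.mulVec y)) * t + (x ⬝ᵥ A.mulVec x) := by
          simp [Matrix.mulVec_add, Matrix.mulVec_smul, add_dotProduct,
            smul_dotProduct, dotProduct_add, dotProduct_smul,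
            smul_eq_mul, hsym]
          ring
  have := discrim_le_zero key
  rw [discrim] at this
  nlinarith [this]

lemma lammin {d : ℕ} {G : Matrix (Fin d) (Fin d) ℝ} (hG : G.PosDef) (v : Fin d → ℝ) :
    (∑ i, v i ^ 2) ≤ matOpNorm G⁻¹ * (v ⬝ᵥ G.mulVec v) := by
  set s : ℝ := ∑ i, v i ^ 2 with hs
  have hs0 : 0 ≤ s := Finset.sum_nonneg fun i _ => sq_nonneg _
  set y : Fin d → ℝ := G⁻¹.mulVec v with hy
  have hGy : G.mulVec y = v := by
    rw [hy, Matrix.mulVec_mulVec, Matrix.mul_nonsing_inv _ (isUnit_iff_ne_zero.mpr hG.det_pos.ne'), Matrix.one_mulVec]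
  have hvv : v ⬝ᵥ G.mulVec y = s := by
    rw [hGy, hs]; simp [dotProduct, sq]
  have hyy : y ⬝ᵥ G.mulVec y = v ⬝ᵥ G⁻¹.mulVec v := by
    rw [hGy, dotProduct_comm]
  have hcs := cs_posSemidef hG.posSemidef v y
  rw [hvv, hyy] at hcs
  have hbound : v ⬝ᵥ G⁻¹.mulVec v ≤ matOpNorm G⁻¹ * s := by
    have := opnorm_pair G⁻¹ v v
    rwa [← hs, Real.mul_self_sqrt hs0] at this
  have hGv : 0 ≤ v ⬝ᵥ G.mulVec v := dot_nonneg hG.posSemidef v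
  have hop : 0 ≤ matOpNorm G⁻¹ := norm_nonneg _
  rcases eq_or_lt_of_le hs0 with h0 | h0
  · rw [← h0]; positivity
  · nlinarith [mul_le_mul_of_nonneg_left hbound hGv]

set_option maxHeartbeats 1000000 in
/-- Let `φ(x_k)`, `k = 1,…,K`, be feature vectors with `‖φ(x_k)‖₂ ≤ C`
(sampled i.i.d. from `ν` with invertible second moment `G = E_ν[φφᵀ]`, positive definite),
and `Ḡ_K = Σ_k φ(x_k)φ(x_k)ᵀ + λI`.  If
`‖Ḡ_K/K − (G + (λ/K)I)‖ ≤ 1/(2‖G⁻¹‖)` and `λ/K ≤ 1/(4‖G⁻¹‖)`, then for every `u`: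
`‖u‖_{Ḡ_K⁻¹} ≤ (2/√K)·‖u‖_{G⁻¹}`. -/
theorem stmt14 {d K : ℕ} (hK : 0 < K) (C lam : ℝ) (hlam : 0 < lam)
    (φ : Fin K → Fin d → ℝ)
    (hC : ∀ k, Real.sqrt (∑ i, (φ k i) ^ 2) ≤ C)
    (G : Matrix (Fin d) (Fin d) ℝ) (hG : G.PosDef)
    (hclose : matOpNorm ((K : ℝ)⁻¹ •
        (∑ k, Matrix.vecMulVec (φ k) (φ k) + lam • (1 : Matrix (Fin d) (Fin d) ℝ))
        - (G + (lam / K) • (1 : Matrix (Fin d) (Fin d) ℝ)))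
      ≤ 1 / (2 * matOpNorm G⁻¹))
    (hlamK : lam / K ≤ 1 / (4 * matOpNorm G⁻¹)) :
    ∀ u : Fin d → ℝ,
      wNorm (∑ k, Matrix.vecMulVec (φ k) (φ k) + lam • (1 : Matrix (Fin d) (Fin d) ℝ))⁻¹ u
        ≤ (2 / Real.sqrt K) * wNorm G⁻¹ u := by
  intro u
  set A : Matrix (Fin d) (Fin d) ℝ :=
    ∑ k, Matrix.vecMulVec (φ k) (φ k) + lam • (1 : Matrix (Fin d) (Fin d) ℝ) with hA
  set E : Matrix (Fin d) (Fin d) ℝ :=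
    (K : ℝ)⁻¹ • A - (G + (lam / K) • (1 : Matrix (Fin d) (Fin d) ℝ)) with hE
  have hKpos : (0:ℝ) < K := Nat.cast_pos.mpr hK
  -- A is positive definite
  have hsumPSD : (∑ k, Matrix.vecMulVec (φ k) (φ k)).PosSemidef := by
    apply Finset.sum_induction _ _ (fun a b ha hb => ha.add hb) Matrix.PosSemidef.zero
    intro k _
    have : Matrix.vecMulVec (φ k) (φ k)
        = (Matrix.replicateRow Unit (φ k))ᴴ * (Matrix.replicateRow Unit (φ k)) := by
      ext i j
      simp [Matrix.vecMulVec_apply, Matrix.mul_apply, Matrix.conjTranspose_apply,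
        Matrix.replicateRow_apply, mul_comm]
    rw [this]
    exact Matrix.posSemidef_conjTranspose_mul_self _
  have hlamPD : (lam • (1 : Matrix (Fin d) (Fin d) ℝ)).PosDef := by
    rw [Matrix.smul_one_eq_diagonal]
    exact Matrix.PosDef.diagonal (fun i => hlam)
  have hAPD : A.PosDef := Matrix.PosDef.posSemidef_add hsumPSD hlamPD
  have hAinvPD : A⁻¹.PosDef := hAPD.inv
  -- key Loewner-type bound: (K/2) * wᵀGw ≤ wᵀAw
  have hkey : ∀ w : Fin d → ℝ, (K : ℝ) / 2 * (w ⬝ᵥ G.mulVec w) ≤ w ⬝ᵥ A.mulVec w := by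
    intro w
    set s : ℝ := ∑ i, w i ^ 2 with hsdef
    have hs0 : 0 ≤ s := Finset.sum_nonneg fun i _ => sq_nonneg _
    have hEbound : -(w ⬝ᵥ E.mulVec w) ≤ (1 / (2 * matOpNorm G⁻¹)) * s := by
      have h1 : w ⬝ᵥ (-E).mulVec w ≤ matOpNorm (-E) * (Real.sqrt s * Real.sqrt s) :=
        opnorm_pair (-E) w w
      have h2 : matOpNorm (-E) = matOpNorm E := by
        unfold matOpNorm; rw [map_neg, norm_neg]
      rw [h2, Real.mul_self_sqrt hs0, Matrix.neg_mulVec, dotProduct_neg] at h1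
      calc -(w ⬝ᵥ E.mulVec w) ≤ matOpNorm E * s := h1
        _ ≤ (1 / (2 * matOpNorm G⁻¹)) * s := mul_le_mul_of_nonneg_right hclose hs0
    have hEexp : w ⬝ᵥ E.mulVec w
        = (K:ℝ)⁻¹ * (w ⬝ᵥ A.mulVec w) - (w ⬝ᵥ G.mulVec w) - (lam / K) * s := by
      rw [hE]
      rw [Matrix.sub_mulVec, Matrix.add_mulVec, dotProduct_sub, dotProduct_add,
        Matrix.smul_mulVec, Matrix.smul_mulVec, Matrix.one_mulVec,
        dotProduct_smul, dotProduct_smul]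
      have : w ⬝ᵥ w = s := by simp [dotProduct, hsdef, sq]
      rw [this]; simp only [smul_eq_mul]; ring
    have hlm : s ≤ matOpNorm G⁻¹ * (w ⬝ᵥ G.mulVec w) := lammin hG w
    have hGw : 0 ≤ w ⬝ᵥ G.mulVec w := dot_nonneg hG.posSemidef w
    have hop : 0 ≤ matOpNorm G⁻¹ := norm_nonneg _
    rcases eq_or_lt_of_le hop with hop0 | hop0
    · -- matOpNorm G⁻¹ = 0 : then s = 0, w = 0
      have hs : s = 0 := le_antisymm (by nlinarith) hs0
      have hw : w = 0 := by
        funext i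
        have hi : w i ^ 2 = 0 := by
          have := Finset.sum_eq_zero_iff_of_nonneg
            (fun i (_ : i ∈ Finset.univ) => sq_nonneg (w i)) |>.mp hs i (Finset.mem_univ i)
          exact this
        exact pow_eq_zero_iff (n := 2) (by norm_num) |>.mp hi
      simp [hw]
    · -- matOpNorm G⁻¹ > 0
      have hlamKs : 0 ≤ (lam / K) * s := by positivity
      have h1 : (1 / (2 * matOpNorm G⁻¹)) * s ≤ (1/2) * (w ⬝ᵥ G.mulVec w) := by
        rw [div_mul_eq_mul_div, one_mul, div_le_iff₀ (by positivity)]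
        nlinarith
      have h2 : (1/2) * (w ⬝ᵥ G.mulVec w) ≤ (K:ℝ)⁻¹ * (w ⬝ᵥ A.mulVec w) := by
        rw [hEexp] at hEbound
        linarith
      have h3 := mul_le_mul_of_nonneg_left h2 hKpos.le
      calc (K : ℝ) / 2 * (w ⬝ᵥ G.mulVec w) = (K:ℝ) * ((1/2) * (w ⬝ᵥ G.mulVec w)) := by ring
        _ ≤ (K:ℝ) * ((K:ℝ)⁻¹ * (w ⬝ᵥ A.mulVec w)) := h3
        _ = w ⬝ᵥ A.mulVec w := by field_simp
  -- Now the Cauchy–Schwarz argument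
  have hAdet : IsUnit A.det := isUnit_iff_ne_zero.mpr hAPD.det_pos.ne'
  have hGdet : IsUnit G.det := isUnit_iff_ne_zero.mpr hG.det_pos.ne'
  set w : Fin d → ℝ := A⁻¹.mulVec u with hw
  set t : ℝ := u ⬝ᵥ A⁻¹.mulVec u with ht
  set r : ℝ := u ⬝ᵥ G⁻¹.mulVec u with hr
  have ht0 : 0 ≤ t := dot_nonneg hAinvPD.posSemidef u
  have hr0 : 0 ≤ r := dot_nonneg hG.inv.posSemidef u
  have hAw : A.mulVec w = u := by
    rw [hw, Matrix.mulVec_mulVec, Matrix.mul_nonsing_inv _ hAdet, Matrix.one_mulVec]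
  have hwAw : w ⬝ᵥ A.mulVec w = t := by
    rw [hAw, dotProduct_comm, ht, hw]
  set y : Fin d → ℝ := G⁻¹.mulVec u with hy
  have hGy : G.mulVec y = u := by
    rw [hy, Matrix.mulVec_mulVec, Matrix.mul_nonsing_inv _ hGdet, Matrix.one_mulVec]
  have hwGy : w ⬝ᵥ G.mulVec y = t := by
    rw [hGy]
    rw [ht, hw, dotProduct_comm]
  have hyGy : y ⬝ᵥ G.mulVec y = r := by
    rw [hGy, dotProduct_comm, hr, hy]
  have hcs := cs_posSemidef hG.posSemidef w y
  rw [hwGy, hyGy] at hcs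
  have hwGw : (K : ℝ) / 2 * (w ⬝ᵥ G.mulVec w) ≤ t := hwAw ▸ hkey w
  -- conclude t ≤ (2/K) * r
  have hGle : w ⬝ᵥ G.mulVec w ≤ 2 / K * t := by
    have h := mul_le_mul_of_nonneg_left hwGw (le_of_lt (show (0:ℝ) < 2 / K by positivity))
    calc w ⬝ᵥ G.mulVec w = 2 / K * ((K:ℝ) / 2 * (w ⬝ᵥ G.mulVec w)) := by
          field_simp
      _ ≤ 2 / K * t := h
  have htr : t * t ≤ 2 / K * (t * r) := by
    have := mul_le_mul_of_nonneg_right hGle hr0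
    calc t * t = t ^ 2 := by ring
      _ ≤ (w ⬝ᵥ G.mulVec w) * r := hcs
      _ ≤ 2 / K * t * r := this
      _ = 2 / K * (t * r) := by ring
  have hfinal : t ≤ 4 / K * r := by
    rcases eq_or_lt_of_le ht0 with h0 | h0
    · rw [← h0]; positivity
    · have h' : t * t ≤ (2 / K * r) * t := by linarith [htr]
      have h2 : t ≤ 2 / K * r := le_of_mul_le_mul_right h' h0
      have h3 : 0 ≤ 2 / K * r := by positivity
      have h4 : (2:ℝ) / K * r ≤ 4 / K * r :=
        mul_le_mul_of_nonneg_right ((div_le_div_iff_of_pos_right hKpos).mpr (by norm_num)) hr0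
      linarith
  -- translate to wNorm
  have hwn : wNorm A⁻¹ u = Real.sqrt t := by rw [wNorm, ht]
  have hgn : wNorm G⁻¹ u = Real.sqrt r := by rw [wNorm, hr]
  rw [hwn, hgn]
  have h4 : Real.sqrt (4 / K * r) = 2 / Real.sqrt K * Real.sqrt r := by
    rw [Real.sqrt_mul (by positivity), Real.sqrt_div (by norm_num : (0:ℝ) ≤ 4),
      show Real.sqrt 4 = 2 from by
        rw [show (4:ℝ) = 2 ^ 2 by norm_num, Real.sqrt_sq (by norm_num)]]
  calc Real.sqrt t ≤ Real.sqrt (4 / K * r) := Real.sqrt_le_sqrt hfinal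
    _ = 2 / Real.sqrt K * Real.sqrt r := h4
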